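/- In any algebra satisfying (B1)–(B10), with ∼x := (x ∨ ¬x) ∧ ∼̇x and ∇x := ¬¬x, the identity x ∧ ∼x = ∼x ∧ ∇x holds for all x. -/
import Mathlib


theorem stmt {A : Type*} [DistribLattice A] [BoundedOrder A]
    (n s : A → A)
    (B1 : ∀ x : A, x ⊓ n x = ⊥)
    (B2 : ∀ x : A, x ⊔ s x = ⊤)
    (B3 : ∀ x : A, n x ⊓ s (n x) = ⊥)
    (B4 : ∀ x : A, s x ⊔ n (s x) = ⊤)
    (B5 : ∀ x y : A, s (x ⊓ y) = s x ⊔ s y)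
    (B6 : ∀ x y : A, n (x ⊔ y) = n x ⊓ n y)
    (B7 : ∀ x y : A, n (x ⊓ n y) = n x ⊔ n (n y))
    (B8 : ∀ x y : A, s (x ⊔ s y) = s x ⊓ s (s y))
    (B9 : ∀ x y : A, (x ⊔ y) ⊓ s (x ⊔ y) ≤ x ⊔ n x)
    (B10 : ∀ x y : A, x ⊓ s x ⊓ y ⊓ s y ≤ s (x ⊔ y))
    (m : A → A) (hm : ∀ x : A, m x = (x ⊔ n x) ⊓ s x)
    (d : A → A) (hd : ∀ x : A, d x = n (n x)) :
    ∀ x : A, x ⊓ m x = m x ⊓ d x := by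
  intro x
  have h1 : n x ⊔ n (n x) = n ⊥ := by rw [← B7 x x, B1]
  have h2 : x ⊓ s x ≤ n ⊥ := by simpa using B9 ⊥ x
  have h3 : x ⊓ s x ≤ n x ⊔ n (n x) := h1 ▸ h2
  have h4 : x ⊓ s x = x ⊓ s x ⊓ n (n x) := by
    calc x ⊓ s x = x ⊓ s x ⊓ (n x ⊔ n (n x)) := (inf_eq_left.mpr h3).symm
      _ = (x ⊓ s x ⊓ n x) ⊔ (x ⊓ s x ⊓ n (n x)) := inf_sup_left _ _ _
      _ = x ⊓ s x ⊓ n (n x) := by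
          rw [inf_right_comm x (s x) (n x), B1]; simp
  rw [hm, hd]
  calc x ⊓ ((x ⊔ n x) ⊓ s x) = x ⊓ s x := by rw [← inf_assoc, inf_sup_self]
    _ = x ⊓ s x ⊓ n (n x) := h4
    _ = (x ⊔ n x) ⊓ s x ⊓ n (n x) := by
        rw [inf_sup_right, inf_sup_right, inf_right_comm (n x) (s x) (n (n x)),
          B1 (n x)]
        simp
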